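/- arXiv:2203.14427 — 2 statements merged into one kernel-verified Lean document; each statement's English description precedes it below -/
import Mathlib

section
/- Let Γ be a group, K a normal subgroup of finite index, R a finite set of coset representatives, and E an equivalence relation on X. The map f : (X^R)^K → X^Γ defined by f(x)(γ·a) = x(γ)(a) is a homomorphism from the jump equivalence relation (E^R)^[K] to the jump E^[Γ]: if there exists ζ ∈ K such that ζ·x is (E^R)^K-related to y, then there exists δ ∈ Γ such that δ·f(x) is E^Γ-related to f(y). -/
/-- The coset-decomposition map `f` is a homomorphism from the jump
`(E^R)^[K]` to the jump `E^[Γ]`. -/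
theorem stmt1 {Γ X : Type*} [Group Γ] (K : Subgroup Γ) [K.Normal] (hK : K.index ≠ 0)
    (R : Set Γ) (hR : R.Finite) (E : X → X → Prop) (hE : Equivalence E)
    (κ : Γ → K) (ρ : Γ → R)
    (hdec : ∀ γ : Γ, ((κ γ : Γ) * (ρ γ : Γ) = γ))
    (huniq : ∀ (k : K) (a : R), κ ((k : Γ) * (a : Γ)) = k ∧ ρ ((k : Γ) * (a : Γ)) = a)
    (f : (K → R → X) → (Γ → X))
    (hf : ∀ (x : K → R → X) (γ : Γ), f x γ = x (κ γ) (ρ γ))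
    (x y : K → R → X)
    (hxy : ∃ ζ : K, ∀ (γ : K) (a : R), E (x (ζ⁻¹ * γ) a) (y γ a)) :
    ∃ δ : Γ, ∀ γ : Γ, E (f x (δ⁻¹ * γ)) (f y γ) := by
  obtain ⟨ζ, hζ⟩ := hxy
  refine ⟨(ζ : Γ), fun γ => ?_⟩
  have key : ((ζ⁻¹ * κ γ : K) : Γ) * ((ρ γ : Γ)) = (ζ : Γ)⁻¹ * γ := by
    push_cast
    rw [mul_assoc, hdec γ]
  have h1 := huniq (ζ⁻¹ * κ γ) (ρ γ)
  rw [key] at h1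
  rw [hf x, hf y, h1.1, h1.2]
  exact hζ (κ γ) (ρ γ)
end

section
/- Let Γ be an infinite group, K ⊴ Γ a normal subgroup of finite index, and E an equivalence relation on X. For x ∈ X^Γ, let x' ∈ (X^R)^K be the preimage of x under the bijection f (where R is a finite set of coset representatives). Then the E^[Γ]-class of x is determined by the (E^R)^[K]-class of x': if x'₁ and x'₂ are (E^R)^[K]-equivalent then f(x'₁) and f(x'₂) are E^[Γ]-equivalent. -/
/-- For Γ infinite, The coset-decomposition map `f` is a homomorphism from the jump
`(E^R)^[K]` to the jump `E^[Γ]`. -/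
theorem stmt19 {Γ X : Type*} [Group Γ] [Infinite Γ] (K : Subgroup Γ) [K.Normal] (hK : K.index ≠ 0)
    (R : Set Γ) (hR : R.Finite) (E : X → X → Prop) (hE : Equivalence E)
    (κ : Γ → K) (ρ : Γ → R)
    (hdec : ∀ γ : Γ, ((κ γ : Γ) * (ρ γ : Γ) = γ))
    (huniq : ∀ (k : K) (a : R), κ ((k : Γ) * (a : Γ)) = k ∧ ρ ((k : Γ) * (a : Γ)) = a)
    (f : (K → R → X) → (Γ → X))
    (hf : ∀ (x : K → R → X) (γ : Γ), f x γ = x (κ γ) (ρ γ))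
    (x y : K → R → X)
    (hxy : ∃ ζ : K, ∀ (γ : K) (a : R), E (x (ζ⁻¹ * γ) a) (y γ a)) :
    ∃ δ : Γ, ∀ γ : Γ, E (f x (δ⁻¹ * γ)) (f y γ) := by
  obtain ⟨ζ, hζ⟩ := hxy
  refine ⟨(ζ : Γ), fun γ => ?_⟩
  have hdecγ : ((κ γ : Γ)) * ((ρ γ : Γ)) = γ := hdec γ
  have key : (ζ : Γ)⁻¹ * γ = ((ζ⁻¹ * κ γ : K) : Γ) * ((ρ γ : Γ)) := by
    push_cast
    rw [mul_assoc, hdecγ]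
  rw [hf, hf, key, (huniq (ζ⁻¹ * κ γ) (ρ γ)).1, (huniq (ζ⁻¹ * κ γ) (ρ γ)).2]
  exact hζ (κ γ) (ρ γ)
end
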